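/- Consider the closed-loop interconnection of the plant ż = −z + ξ1²ξ2, ξ̇1 = w1 + 4zξ1ξ2 − 4ξ1³ξ2² − (4/3)ξ1^{1/3}, ξ̇2 = ξ3, ξ̇3 = w2 + 2zξ1² − 2ξ1⁴ξ2 − 2ξ2 − ξ3, with the uncertainty ẋ_σ1 = −x_σ1³ + ξ1, ẋ_σ2 = −x_σ2 + ξ2, and feedback w1 = x_σ1, w2 = x_σ2. Then along any C^1 solution, the function W = (z − ξ1²ξ2)² + ξ1^{4/3} + ξ2² + (1/2)ξ3² + (1/4)x_σ1⁴ + (1/2)x_σ2² − ξ1 x_σ1 − ξ2 x_σ2 satisfies Ẇ = −2ż² − ξ̇1² − ξ̇2² − ẋ_σ1² − ẋ_σ2² ≤ 0. -/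

import Mathlib

/-- The real cube root of `x`. -/
noncomputable def realCbrt (x : ℝ) : ℝ :=
  if 0 ≤ x then x ^ ((1:ℝ)/3) else -((-x) ^ ((1:ℝ)/3))

lemma realCbrt_key (u : ℝ) (hu : 0 < u) : u ^ ((1:ℝ)/3) = u ^ ((4:ℝ)/3 - 2) * u := by
  rw [show (4:ℝ)/3-2 = 1/3 + (-1) by norm_num, Real.rpow_add hu, Real.rpow_neg_one]
  field_simp

lemma realCbrt_eq (x : ℝ) : realCbrt x = |x| ^ ((4:ℝ)/3 - 2) * x := by
  rcases lt_trichotomy x 0 with hx | hx | hx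
  · have hpos : (0:ℝ) < -x := by linarith
    rw [realCbrt, if_neg (not_le.mpr hx), abs_of_neg hx, realCbrt_key (-x) hpos]
    ring
  · subst hx; simp [realCbrt, Real.zero_rpow]
  · rw [realCbrt, if_pos hx.le, abs_of_pos hx, realCbrt_key x hx]

lemma myHasDeriv (x : ℝ) :
    HasDerivAt (fun y : ℝ => |y| ^ ((4:ℝ)/3)) ((4/3) * realCbrt x) x := by
  have := hasDerivAt_abs_rpow x (p := (4:ℝ)/3) (by norm_num)
  convert this using 1
  rw [realCbrt_eq]; ring

/-- for the closed-loop interconnection of the example plant (with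
feedback w1 = x_σ1, w2 = x_σ2) and the OSNI uncertainty, the function
W = (z − ξ1²ξ2)² + |ξ1|^{4/3} + ξ2² + (1/2)ξ3² + (1/4)x_σ1⁴ + (1/2)x_σ2²
    − ξ1 x_σ1 − ξ2 x_σ2
satisfies Ẇ = −2ż² − ξ̇1² − ξ̇2² − ẋ_σ1² − ẋ_σ2² ≤ 0 along any C¹ solution. -/
theorem stmt11 (z ξ1 ξ2 ξ3 xσ1 xσ2 z' ξ1' ξ2' ξ3' xσ1' xσ2' : ℝ → ℝ)
    (hz : ∀ t, HasDerivAt z (z' t) t)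
    (hξ1 : ∀ t, HasDerivAt ξ1 (ξ1' t) t)
    (hξ2 : ∀ t, HasDerivAt ξ2 (ξ2' t) t)
    (hξ3 : ∀ t, HasDerivAt ξ3 (ξ3' t) t)
    (hxσ1 : ∀ t, HasDerivAt xσ1 (xσ1' t) t)
    (hxσ2 : ∀ t, HasDerivAt xσ2 (xσ2' t) t)
    (hz' : ∀ t, z' t = -(z t) + (ξ1 t)^2 * ξ2 t)
    (hξ1' : ∀ t, ξ1' t = xσ1 t + 4 * z t * ξ1 t * ξ2 t - 4 * (ξ1 t)^3 * (ξ2 t)^2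
      - (4/3) * realCbrt (ξ1 t))
    (hξ2' : ∀ t, ξ2' t = ξ3 t)
    (hξ3' : ∀ t, ξ3' t = xσ2 t + 2 * z t * (ξ1 t)^2 - 2 * (ξ1 t)^4 * ξ2 t
      - 2 * ξ2 t - ξ3 t)
    (hxσ1' : ∀ t, xσ1' t = -(xσ1 t)^3 + ξ1 t)
    (hxσ2' : ∀ t, xσ2' t = -(xσ2 t) + ξ2 t) :
    ∀ t : ℝ,
      deriv (fun s => (z s - (ξ1 s)^2 * ξ2 s)^2 + |ξ1 s| ^ ((4:ℝ)/3)
          + (ξ2 s)^2 + (1/2) * (ξ3 s)^2 + (1/4) * (xσ1 s)^4 + (1/2) * (xσ2 s)^2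
          - ξ1 s * xσ1 s - ξ2 s * xσ2 s) t
        = -2 * (z' t)^2 - (ξ1' t)^2 - (ξ2' t)^2 - (xσ1' t)^2 - (xσ2' t)^2 ∧
      deriv (fun s => (z s - (ξ1 s)^2 * ξ2 s)^2 + |ξ1 s| ^ ((4:ℝ)/3)
          + (ξ2 s)^2 + (1/2) * (ξ3 s)^2 + (1/4) * (xσ1 s)^4 + (1/2) * (xσ2 s)^2
          - ξ1 s * xσ1 s - ξ2 s * xσ2 s) t ≤ 0 := by
  intro t
  have h1 := ((hz t).sub (((hξ1 t).pow 2).mul (hξ2 t))).pow 2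
  have h2 : HasDerivAt (fun s => |ξ1 s| ^ ((4:ℝ)/3))
      ((4/3) * realCbrt (ξ1 t) * ξ1' t) t :=
    (myHasDeriv (ξ1 t)).comp t (hξ1 t)
  have h3 := (hξ2 t).pow 2
  have h4 := ((hξ3 t).pow 2).const_mul ((1:ℝ)/2)
  have h5 := ((hxσ1 t).pow 4).const_mul ((1:ℝ)/4)
  have h6 := ((hxσ2 t).pow 2).const_mul ((1:ℝ)/2)
  have h7 := (hξ1 t).mul (hxσ1 t)
  have h8 := (hξ2 t).mul (hxσ2 t)
  have hW := ((((((h1.add h2).add h3).add h4).add h5).add h6).sub h7).sub h8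
  have heq : deriv (fun s => (z s - (ξ1 s)^2 * ξ2 s)^2 + |ξ1 s| ^ ((4:ℝ)/3)
          + (ξ2 s)^2 + (1/2) * (ξ3 s)^2 + (1/4) * (xσ1 s)^4 + (1/2) * (xσ2 s)^2
          - ξ1 s * xσ1 s - ξ2 s * xσ2 s) t
        = -2 * (z' t)^2 - (ξ1' t)^2 - (ξ2' t)^2 - (xσ1' t)^2 - (xσ2' t)^2 := by
    erw [hW.deriv]; simp only [Pi.sub_apply, Pi.mul_apply, Pi.pow_apply]
    rw [hz' t, hξ1' t, hξ2' t, hξ3' t, hxσ1' t, hxσ2' t]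
    ring
  refine ⟨heq, heq ▸ ?_⟩
  nlinarith [sq_nonneg (z' t), sq_nonneg (ξ1' t), sq_nonneg (ξ2' t),
    sq_nonneg (xσ1' t), sq_nonneg (xσ2' t)]
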